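/- Let $n \geq 2$ and $2 < \beta < 2n$. Define the radial function $h_{\beta}$ on $\mathbb{R}^{2n}$ by $h_{\beta}(x) = 1$ for $|x| < 1$ and $h_{\beta}(x) = |x|^{-\beta}$ for $|x| \geq 1$. Then there exists a unique radially symmetric continuous function $w$ on $\mathbb{R}^{2n}$ vanishing at infinity such that $\Delta w = h_{\beta}$ in $\mathbb{R}^{2n}$; moreover there is a constant $C_{n,\beta}>0$ such that $|w(x)| \leq C_{n,\beta}\, h_{\beta-2}(x)$ for all $x \in \mathbb{R}^{2n}$. -/

import Mathlib

open MeasureTheory Filter Real Set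

noncomputable section

/-- The Laplacian of a real-valued function on Euclidean space `ℝ^m`,
computed as the sum of the second directional derivatives along coordinate directions. -/
def lap {m : ℕ} (f : EuclideanSpace ℝ (Fin m) → ℝ) (x : EuclideanSpace ℝ (Fin m)) : ℝ :=
  ∑ i : Fin m, fderiv ℝ (fun y => fderiv ℝ f y (EuclideanSpace.single i 1)) x
    (EuclideanSpace.single i 1)

/-- The iterated Laplacian `Δ^k` on `ℝ^m`. -/
def lapPow (m k : ℕ) (f : EuclideanSpace ℝ (Fin m) → ℝ) : EuclideanSpace ℝ (Fin m) → ℝ :=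
  (fun g => lap g)^[k] f

/-- The iterated negative Laplacian `(-Δ)^k` on `ℝ^m`. -/
def negLapPow (m k : ℕ) (f : EuclideanSpace ℝ (Fin m) → ℝ) : EuclideanSpace ℝ (Fin m) → ℝ :=
  (fun g x => -(lap g x))^[k] f

/-- The constant `γₙ = 2^(2n-1) (n-1)! πⁿ`. -/
def gam (n : ℕ) : ℝ := 2 ^ (2*n - 1) * (Nat.factorial (n-1)) * π ^ n

/-- The filter of neighborhoods of infinity (`|x| → ∞`) on `ℝ^m`. -/
def atInfty (m : ℕ) : Filter (EuclideanSpace ℝ (Fin m)) :=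
  Filter.comap (fun x => ‖x‖) Filter.atTop

/-- `v(x) = O(ln |x|)` as `|x| → ∞`. -/
def BigOLog {m : ℕ} (v : EuclideanSpace ℝ (Fin m) → ℝ) : Prop :=
  ∃ C > 0, ∃ R > 1, ∀ x : EuclideanSpace ℝ (Fin m), R ≤ ‖x‖ → |v x| ≤ C * Real.log ‖x‖

/-- A function on `ℝ^m` is radially symmetric if its value depends only on `|x|`. -/
def Radial {m : ℕ} (g : EuclideanSpace ℝ (Fin m) → ℝ) : Prop :=
  ∀ x y : EuclideanSpace ℝ (Fin m), ‖x‖ = ‖y‖ → g x = g y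

/-- The radial profile `h_γ(x) = 1` for `|x| < 1` and `h_γ(x) = |x|^{-γ}` for `|x| ≥ 1`. -/
def hfun (m : ℕ) (γ : ℝ) (x : EuclideanSpace ℝ (Fin m)) : ℝ :=
  if ‖x‖ < 1 then 1 else ‖x‖ ^ (-γ)

namespace S16
open Topology

/-- piecewise derivative glue -/
lemma pw_deriv {f g f' g' : ℝ → ℝ} {c : ℝ}
    (hf : ∀ t ≤ c, HasDerivAt f (f' t) t) (hg : ∀ t, c ≤ t → HasDerivAt g (g' t) t)
    (hv : f c = g c) (hd : f' c = g' c) (t : ℝ) :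
    HasDerivAt (fun s => if s < c then f s else g s) (if t < c then f' t else g' t) t := by
  rcases lt_trichotomy t c with h | rfl | h
  · rw [if_pos h]
    refine (hf t h.le).congr_of_eventuallyEq ?_
    filter_upwards [Iio_mem_nhds h] with s hs
    rw [if_pos (mem_Iio.mp hs)]
  · rw [if_neg (lt_irrefl t)]
    have h1 : HasDerivWithinAt (fun s => if s < t then f s else g s) (g' t) (Iic t) t := by
      refine HasDerivWithinAt.congr ((hf t le_rfl).hasDerivWithinAt.congr_deriv hd)
        (fun y hy => ?_) (by simp [hv])
      rcases lt_or_eq_of_le (mem_Iic.mp hy) with h' | h'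
      · rw [if_pos h']
      · rw [h', if_neg (lt_irrefl t), hv]
    have h2 : HasDerivWithinAt (fun s => if s < t then f s else g s) (g' t) (Ici t) t := by
      refine HasDerivWithinAt.congr (hg t le_rfl).hasDerivWithinAt (fun y hy => ?_) (by simp)
      rw [if_neg (not_lt.mpr (mem_Ici.mp hy))]
    have := h1.union h2
    rw [Iic_union_Ici] at this
    exact hasDerivWithinAt_univ.mp this
  · rw [if_neg (not_lt.mpr h.le)]
    refine (hg t h.le).congr_of_eventuallyEq ?_
    filter_upwards [Ioi_mem_nhds h] with s hs
    rw [if_neg (not_lt.mpr (le_of_lt (mem_Ioi.mp hs)))]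

variable (n : ℕ) (β : ℝ)

def aa : ℝ := 1 - β/2
def bb : ℝ := 1 - (n:ℝ)
def c1 : ℝ := ((2-β)*(2*(n:ℝ)-β))⁻¹
def c2 : ℝ := β/((4*(n:ℝ)*(2*(n:ℝ)-β))*((n:ℝ)-1))
def cA : ℝ := c1 n β + c2 n β - 1/(4*(n:ℝ))
def Phi (t : ℝ) : ℝ :=
  if t < 1 then cA n β + t/(4*(n:ℝ)) else c1 n β * t ^ aa β + c2 n β * t ^ bb n
def Pd (t : ℝ) : ℝ :=
  if t < 1 then 1/(4*(n:ℝ))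
  else c1 n β * (aa β * t ^ (aa β - 1)) + c2 n β * (bb n * t ^ (bb n - 1))
def Pd2 (t : ℝ) : ℝ :=
  if t < 1 then 0
  else c1 n β * (aa β * ((aa β - 1) * t ^ (aa β - 1 - 1))) +
    c2 n β * (bb n * ((bb n - 1) * t ^ (bb n - 1 - 1)))
def hte (t : ℝ) : ℝ := if t < 1 then 1 else t ^ (-(β/2))
def HH (t : ℝ) : ℝ :=
  if t < 1 then t^n/(4*(n:ℝ))
  else 1/(4*(n:ℝ)) + (t ^ ((n:ℝ) - β/2) - 1)/(4*(n:ℝ) - 2*β)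

section hyps
variable (hn : 2 ≤ n) (hβ1 : 2 < β) (hβ2 : β < 2*(n:ℝ))
include hn hβ1 hβ2

lemma hnR : (2:ℝ) ≤ (n:ℝ) := by exact_mod_cast hn
lemma hnpos : (0:ℝ) < (n:ℝ) := by have := hnR n β hn hβ1 hβ2; linarith
lemma h2nβ : 0 < 2*(n:ℝ) - β := by linarith
lemma h2β : (2:ℝ) - β ≠ 0 := by linarith
lemma hn1 : (0:ℝ) < (n:ℝ) - 1 := by have := hnR n β hn hβ1 hβ2; linarith
lemma key1 : ((2-β)*(2*(n:ℝ)-β)) * c1 n β = 1 :=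
  mul_inv_cancel₀ (by
    have := h2nβ n β hn hβ1 hβ2
    exact mul_ne_zero (by linarith) (by linarith))

lemma md1 : c1 n β * aa β + c2 n β * bb n = 1/(4*(n:ℝ)) := by
  have h1 : (2:ℝ) - β ≠ 0 := by linarith
  have h2 : 2*(n:ℝ) - β ≠ 0 := by have := h2nβ n β hn hβ1 hβ2; linarith
  have h3 : (n:ℝ) ≠ 0 := by have := hnpos n β hn hβ1 hβ2; linarith
  have h4 : (n:ℝ) - 1 ≠ 0 := by have := hn1 n β hn hβ1 hβ2; linarith
  rw [c1, c2, aa, bb]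
  field_simp
  ring

lemma md2 : c1 n β * (aa β * (aa β - 1)) + c2 n β * (bb n * (bb n - 1)) = 0 := by
  have h1 : (2:ℝ) - β ≠ 0 := by linarith
  have h2 : 2*(n:ℝ) - β ≠ 0 := by have := h2nβ n β hn hβ1 hβ2; linarith
  have h3 : (n:ℝ) ≠ 0 := by have := hnpos n β hn hβ1 hβ2; linarith
  have h4 : (n:ℝ) - 1 ≠ 0 := by have := hn1 n β hn hβ1 hβ2; linarith
  rw [c1, c2, aa, bb]
  field_simp
  ring

lemma mv1 : cA n β + 1/(4*(n:ℝ)) = c1 n β + c2 n β := by rw [cA]; ring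

end hyps

def HH' (t : ℝ) : ℝ :=
  if t < 1 then (n:ℝ)*t^(n-1)/(4*(n:ℝ))
  else ((n:ℝ) - β/2)*t^((n:ℝ) - β/2 - 1)/(4*(n:ℝ) - 2*β)

section hyps2
variable (hn : 2 ≤ n) (hβ1 : 2 < β) (hβ2 : β < 2*(n:ℝ))
include hn hβ1 hβ2

lemma hasDerivAt_Phi (t : ℝ) : HasDerivAt (Phi n β) (Pd n β t) t := by
  have hf : ∀ s ≤ (1:ℝ), HasDerivAt (fun u : ℝ => cA n β + u/(4*(n:ℝ))) (1/(4*(n:ℝ))) s := by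
    intro s _
    simpa using ((hasDerivAt_id s).div_const (4*(n:ℝ))).const_add (cA n β)
  have hg : ∀ s : ℝ, (1:ℝ) ≤ s →
      HasDerivAt (fun u : ℝ => c1 n β * u ^ aa β + c2 n β * u ^ bb n)
        (c1 n β * (aa β * s ^ (aa β - 1)) + c2 n β * (bb n * s ^ (bb n - 1))) s := by
    intro s hs
    have h0 : s ≠ 0 := by intro h; rw [h] at hs; linarith
    exact ((Real.hasDerivAt_rpow_const (p := aa β) (Or.inl h0)).const_mul (c1 n β)).add
      ((Real.hasDerivAt_rpow_const (p := bb n) (Or.inl h0)).const_mul (c2 n β))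
  have hv : cA n β + (1:ℝ)/(4*(n:ℝ)) = c1 n β * (1:ℝ) ^ aa β + c2 n β * (1:ℝ) ^ bb n := by
    rw [Real.one_rpow, Real.one_rpow, mul_one, mul_one]; exact mv1 n β hn hβ1 hβ2
  have hd : (1:ℝ)/(4*(n:ℝ)) =
      c1 n β * (aa β * (1:ℝ) ^ (aa β - 1)) + c2 n β * (bb n * (1:ℝ) ^ (bb n - 1)) := by
    rw [Real.one_rpow, Real.one_rpow, mul_one, mul_one]; exact (md1 n β hn hβ1 hβ2).symm
  exact pw_deriv hf hg hv hd t

lemma hasDerivAt_Pd (t : ℝ) : HasDerivAt (Pd n β) (Pd2 n β t) t := by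
  have hf : ∀ s ≤ (1:ℝ), HasDerivAt (fun _ : ℝ => 1/(4*(n:ℝ))) ((0:ℝ)) s := by
    intro s _; exact hasDerivAt_const s _
  have hg : ∀ s : ℝ, (1:ℝ) ≤ s →
      HasDerivAt (fun u : ℝ => c1 n β * (aa β * u ^ (aa β - 1)) + c2 n β * (bb n * u ^ (bb n - 1)))
        (c1 n β * (aa β * ((aa β - 1) * s ^ (aa β - 1 - 1))) +
          c2 n β * (bb n * ((bb n - 1) * s ^ (bb n - 1 - 1)))) s := by
    intro s hs
    have h0 : s ≠ 0 := by intro h; rw [h] at hs; linarith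
    exact (((Real.hasDerivAt_rpow_const (p := aa β - 1) (Or.inl h0)).const_mul (aa β)).const_mul
        (c1 n β)).add
      (((Real.hasDerivAt_rpow_const (p := bb n - 1) (Or.inl h0)).const_mul (bb n)).const_mul
        (c2 n β))
  have hv : (1:ℝ)/(4*(n:ℝ)) =
      c1 n β * (aa β * (1:ℝ) ^ (aa β - 1)) + c2 n β * (bb n * (1:ℝ) ^ (bb n - 1)) := by
    rw [Real.one_rpow, Real.one_rpow, mul_one, mul_one]; exact (md1 n β hn hβ1 hβ2).symm
  have hd : (0:ℝ) = c1 n β * (aa β * ((aa β - 1) * (1:ℝ) ^ (aa β - 1 - 1))) +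
      c2 n β * (bb n * ((bb n - 1) * (1:ℝ) ^ (bb n - 1 - 1))) := by
    rw [Real.one_rpow, Real.one_rpow, mul_one, mul_one]; exact (md2 n β hn hβ1 hβ2).symm
  exact pw_deriv hf hg hv hd t

lemma hasDerivAt_HH (t : ℝ) : HasDerivAt (HH n β) (HH' n β t) t := by
  have h4n : (4*(n:ℝ)) ≠ 0 := by have := hnpos n β hn hβ1 hβ2; positivity
  have h4nβ : (4*(n:ℝ) - 2*β) ≠ 0 := by have := h2nβ n β hn hβ1 hβ2; linarith
  have hf : ∀ s ≤ (1:ℝ), HasDerivAt (fun u : ℝ => u^n/(4*(n:ℝ))) ((n:ℝ)*s^(n-1)/(4*(n:ℝ))) s := by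
    intro s _; exact (hasDerivAt_pow n s).div_const _
  have hg : ∀ s : ℝ, (1:ℝ) ≤ s →
      HasDerivAt (fun u : ℝ => 1/(4*(n:ℝ)) + (u ^ ((n:ℝ) - β/2) - 1)/(4*(n:ℝ) - 2*β))
        (((n:ℝ) - β/2)*s^((n:ℝ) - β/2 - 1)/(4*(n:ℝ) - 2*β)) s := by
    intro s hs
    have h0 : s ≠ 0 := by intro h; rw [h] at hs; linarith
    exact ((((Real.hasDerivAt_rpow_const (p := (n:ℝ) - β/2) (Or.inl h0)).sub_const
      1).div_const _).const_add _)
  have hv : (1:ℝ)^n/(4*(n:ℝ)) =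
      1/(4*(n:ℝ)) + ((1:ℝ) ^ ((n:ℝ) - β/2) - 1)/(4*(n:ℝ) - 2*β) := by
    rw [Real.one_rpow, one_pow]; simp
  have hd : (n:ℝ)*(1:ℝ)^(n-1)/(4*(n:ℝ)) =
      ((n:ℝ) - β/2)*(1:ℝ)^((n:ℝ) - β/2 - 1)/(4*(n:ℝ) - 2*β) := by
    rw [Real.one_rpow, one_pow]
    rw [div_eq_div_iff h4n h4nβ]
    ring
  exact pw_deriv hf hg hv hd t

lemma HH'_eq (t : ℝ) (h0 : 0 < t) : HH' n β t = t^(n-1) * hte β t / 4 := by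
  have h4n : (4*(n:ℝ)) ≠ 0 := by have := hnpos n β hn hβ1 hβ2; positivity
  have h4nβ : (4*(n:ℝ) - 2*β) ≠ 0 := by have := h2nβ n β hn hβ1 hβ2; linarith
  by_cases h : t < 1
  · rw [HH', hte, if_pos h, if_pos h]
    field_simp
  · rw [HH', hte, if_neg h, if_neg h]
    have e1 : t ^ ((n:ℝ) - β/2 - 1) = t^((n-1:ℕ):ℝ) * t^(-(β/2)) := by
      rw [← Real.rpow_add h0]
      congr 1
      have : ((n-1:ℕ):ℝ) = (n:ℝ) - 1 := by
        have : 1 ≤ n := by omega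
        push_cast [this]; ring
      rw [this]; ring
    rw [e1, Real.rpow_natCast]
    rw [div_eq_div_iff h4nβ (by norm_num)]
    ring

lemma ode_Pd (t : ℝ) : 4*t*(Pd2 n β t) + 4*(n:ℝ)*(Pd n β t) = hte β t := by
  by_cases h : t < 1
  · rw [Pd, Pd2, hte, if_pos h, if_pos h, if_pos h]
    have h4n : (n:ℝ) ≠ 0 := by have := hnpos n β hn hβ1 hβ2; linarith
    field_simp
    ring
  · have h1 : (1:ℝ) ≤ t := not_lt.mp h
    have h0 : 0 < t := by linarith
    rw [Pd, Pd2, hte, if_neg h, if_neg h, if_neg h]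
    have ea : t ^ (aa β - 1) = t ^ (aa β - 1 - 1) * t := by
      rw [Real.rpow_sub h0 (aa β - 1) 1, Real.rpow_one, div_mul_cancel₀ _ (ne_of_gt h0)]
    have eb : t ^ (bb n - 1) = t ^ (bb n - 1 - 1) * t := by
      rw [Real.rpow_sub h0 (bb n - 1) 1, Real.rpow_one, div_mul_cancel₀ _ (ne_of_gt h0)]
    have eh : t ^ (-(β/2)) = t ^ (aa β - 1 - 1) * t := by
      rw [show -(β/2) = aa β - 1 by rw [aa]; ring,
        Real.rpow_sub h0 (aa β - 1) 1, Real.rpow_one, div_mul_cancel₀ _ (ne_of_gt h0)]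
    rw [ea, eb, eh]
    have k := key1 n β hn hβ1 hβ2
    simp only [aa, bb] at *
    linear_combination (t * (t ^ (1 - β / 2 - 1 - 1) : ℝ)) * k

lemma Pd_one : Pd n β 1 = 1/(4*(n:ℝ)) := by
  rw [Pd, if_neg (lt_irrefl 1), Real.one_rpow, Real.one_rpow, mul_one, mul_one]
  exact md1 n β hn hβ1 hβ2

end hyps2

section hyps3
variable (hn : 2 ≤ n) (hβ1 : 2 < β) (hβ2 : β < 2*(n:ℝ))
include hn hβ1 hβ2

omit hn hβ1 hβ2 in
lemma mvt_eq {F G : ℝ → ℝ} {a b : ℝ} (hab : a < b)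
    (hd : ∀ t ∈ Icc a b, HasDerivAt F (G t) t) :
    ∃ c ∈ Ioo a b, F b - F a = G c * (b - a) := by
  have hcont : ContinuousOn F (Icc a b) := fun x hx => (hd x hx).continuousAt.continuousWithinAt
  obtain ⟨c, hc, hc2⟩ := exists_hasDerivAt_eq_slope F G hab hcont
    (fun x hx => hd x ⟨hx.1.le, hx.2.le⟩)
  refine ⟨c, hc, ?_⟩
  rw [hc2, div_mul_cancel₀ _ (ne_of_gt (sub_pos.mpr hab))]

omit hn hβ1 hβ2 in
lemma deriv_zero_const {F : ℝ → ℝ} (h : ∀ t : ℝ, 0 < t → HasDerivAt F 0 t) {a b : ℝ}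
    (ha : 0 < a) (hb : 0 < b) : F a = F b := by
  rcases lt_trichotomy a b with hab | rfl | hab
  · obtain ⟨c, _, e⟩ := mvt_eq hab (fun t ht => h t (lt_of_lt_of_le ha ht.1))
    have : F b - F a = 0 := by simpa using e
    linarith
  · rfl
  · obtain ⟨c, _, e⟩ := mvt_eq hab (fun t ht => h t (lt_of_lt_of_le hb ht.1))
    have : F a - F b = 0 := by simpa using e
    linarith

lemma Fconst (Ψ dΨ : ℝ → ℝ) (hdiff : ∀ t : ℝ, 0 < t → HasDerivAt Ψ (dΨ t) t)
    (hode : ∀ t : ℝ, 0 < t → 4*t*dΨ t + 4*(n:ℝ)*Ψ t = hte β t) (t : ℝ) (h0 : 0 < t) :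
    t^n * Ψ t - HH n β t = Ψ 1 - HH n β 1 := by
  have key : ∀ s : ℝ, 0 < s → HasDerivAt (fun u => u^n * Ψ u - HH n β u) 0 s := by
    intro s hs
    have h1 := ((hasDerivAt_pow n s).mul (hdiff s hs)).sub (hasDerivAt_HH n β hn hβ1 hβ2 s)
    refine h1.congr_deriv ?_
    rw [HH'_eq n β hn hβ1 hβ2 s hs, ← hode s hs]
    have hsn : s^n = s^(n-1) * s := by
      conv_lhs => rw [show n = (n-1)+1 by omega]
      rw [pow_succ]
    rw [hsn]
    ring
  have e1 := deriv_zero_const key h0 one_pos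
  simpa using e1

lemma HH_one : HH n β 1 = 1/(4*(n:ℝ)) := by
  rw [HH, if_neg (lt_irrefl 1), Real.one_rpow]
  simp

lemma Pd_eq_HH (t : ℝ) (h0 : 0 < t) : t^n * Pd n β t = HH n β t := by
  have e := Fconst n β hn hβ1 hβ2 (Pd n β) (Pd2 n β)
    (fun s _ => hasDerivAt_Pd n β hn hβ1 hβ2 s) (fun s _ => ode_Pd n β hn hβ1 hβ2 s) t h0
  rw [Pd_one n β hn hβ1 hβ2, HH_one n β hn hβ1 hβ2] at e
  linarith

lemma HH_pos (t : ℝ) (h0 : 0 < t) : 0 < HH n β t := by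
  have hnp := hnpos n β hn hβ1 hβ2
  by_cases h : t < 1
  · rw [HH, if_pos h]
    exact div_pos (pow_pos h0 n) (by linarith)
  · rw [HH, if_neg h]
    have h1 : (1:ℝ) ≤ t := not_lt.mp h
    have he : (1:ℝ) ≤ t ^ ((n:ℝ) - β/2) := by
      apply Real.one_le_rpow h1 (by linarith)
    have h2 : 0 < 4*(n:ℝ) - 2*β := by linarith [h2nβ n β hn hβ1 hβ2]
    have h3 : 0 ≤ (t ^ ((n:ℝ) - β/2) - 1)/(4*(n:ℝ) - 2*β) := by
      apply div_nonneg (by linarith) (by linarith)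
    have h4 : 0 < 1/(4*(n:ℝ)) := by
      apply div_pos one_pos (by linarith)
    linarith

lemma Pd_pos (t : ℝ) (h0 : 0 < t) : 0 < Pd n β t := by
  have e := Pd_eq_HH n β hn hβ1 hβ2 t h0
  have h2 := HH_pos n β hn hβ1 hβ2 t h0
  nlinarith [pow_pos h0 n]

omit hn hβ2 in
lemma hte_pos (t : ℝ) : 0 < hte β t := by
  rw [hte]
  by_cases h : t < 1
  · rw [if_pos h]; norm_num
  · rw [if_neg h]; exact Real.rpow_pos_of_pos (by linarith [not_lt.mp h]) _

lemma Phi_tendsto : Tendsto (Phi n β) atTop (𝓝 0) := by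
  have ha : (0:ℝ) < -(aa β) := by rw [aa]; linarith
  have hb : (0:ℝ) < -(bb n) := by rw [bb]; linarith [hnR n β hn hβ1 hβ2]
  have h1 : Tendsto (fun t : ℝ => t ^ aa β) atTop (𝓝 0) := by
    simpa using tendsto_rpow_neg_atTop ha
  have h2 : Tendsto (fun t : ℝ => t ^ bb n) atTop (𝓝 0) := by
    simpa using tendsto_rpow_neg_atTop hb
  have h3 : Tendsto (fun t : ℝ => c1 n β * t ^ aa β + c2 n β * t ^ bb n) atTop (𝓝 0) := by
    have := (h1.const_mul (c1 n β)).add (h2.const_mul (c2 n β))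
    simpa using this
  refine Tendsto.congr' ?_ h3
  filter_upwards [eventually_ge_atTop (1:ℝ)] with t ht
  rw [Phi, if_neg (not_lt.mpr ht)]

lemma blowup {f g : ℝ → ℝ} {c δ M : ℝ} (hc : c < 0) (hδ : 0 < δ)
    (hd : ∀ t ∈ Ioc (0:ℝ) δ, HasDerivAt f (g t) t)
    (hg : ∀ t ∈ Ioc (0:ℝ) δ, g t ≤ c * t ^ (-(n:ℝ)))
    (hM : ∀ t ∈ Ioc (0:ℝ) δ, f t ≤ M) : False := by
  have hn1' : (0:ℝ) < (n:ℝ) - 1 := hn1 n β hn hβ1 hβ2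
  have h1n : (1:ℝ) - (n:ℝ) ≠ 0 := by linarith
  set G : ℝ → ℝ := fun t => c/(1-(n:ℝ)) * t ^ ((1:ℝ) - (n:ℝ)) with hGdef
  have hGd : ∀ t : ℝ, 0 < t → HasDerivAt G (c * t ^ (-(n:ℝ))) t := by
    intro t h0
    have h := (Real.hasDerivAt_rpow_const (x := t) (p := (1:ℝ)-(n:ℝ))
      (Or.inl (ne_of_gt h0))).const_mul (c/(1-(n:ℝ)))
    refine h.congr_deriv ?_
    rw [show (1:ℝ)-(n:ℝ)-1 = -(n:ℝ) by ring]
    field_simp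
  have key : ∀ a ∈ Ioo (0:ℝ) δ, f δ - G δ ≤ f a - G a := by
    intro a ha
    obtain ⟨x, hx, e⟩ := mvt_eq (F := fun t => f t - G t)
      (G := fun t => g t - c * t ^ (-(n:ℝ))) ha.2
      (fun t ht => (hd t ⟨lt_of_lt_of_le ha.1 ht.1, ht.2⟩).sub
        (hGd t (lt_of_lt_of_le ha.1 ht.1)))
    have h1 : g x - c * x ^ (-(n:ℝ)) ≤ 0 := by
      have hx' : x ∈ Ioc (0:ℝ) δ := ⟨lt_trans ha.1 hx.1, hx.2.le⟩
      linarith [hg x hx']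
    nlinarith [sub_pos.mpr ha.2]
  have hT : Tendsto (fun a : ℝ => a ^ ((1:ℝ) - (n:ℝ))) (𝓝[>] (0:ℝ)) atTop := by
    have base : Tendsto (fun a : ℝ => (a⁻¹) ^ ((n:ℝ) - 1)) (𝓝[>] (0:ℝ)) atTop :=
      (tendsto_rpow_atTop hn1').comp tendsto_inv_nhdsGT_zero
    refine Tendsto.congr' ?_ base
    filter_upwards [self_mem_nhdsWithin] with a ha
    rw [Real.inv_rpow (le_of_lt ha), ← Real.rpow_neg (le_of_lt ha),
      show -((n:ℝ)-1) = (1:ℝ)-(n:ℝ) by ring]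
  have hpos : 0 < c/(1-(n:ℝ)) := div_pos_of_neg_of_neg hc (by linarith)
  have hT2 : Tendsto G (𝓝[>] (0:ℝ)) atTop := hT.const_mul_atTop hpos
  have hIoo : Ioo (0:ℝ) δ ∈ 𝓝[>] (0:ℝ) := Ioo_mem_nhdsGT_of_mem ⟨le_rfl, hδ⟩
  have hev : ∀ᶠ a in 𝓝[>] (0:ℝ), a ∈ Ioo (0:ℝ) δ := by
    rw [Filter.eventually_iff]; exact hIoo
  obtain ⟨a, h1, h2⟩ := (hev.and (hT2.eventually_gt_atTop (M - (f δ - G δ)))).exists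
  have := key a h1
  have := hM a ⟨h1.1, h1.2.le⟩
  linarith

end hyps3

section euclid
variable (m : ℕ)

def qf (y : EuclideanSpace ℝ (Fin m)) : ℝ := ∑ j, (y j)^2

def Dq (x : EuclideanSpace ℝ (Fin m)) : EuclideanSpace ℝ (Fin m) →L[ℝ] ℝ :=
  ∑ j, (2 * x j) • (EuclideanSpace.proj j : EuclideanSpace ℝ (Fin m) →L[ℝ] ℝ)

lemma qf_nonneg (y : EuclideanSpace ℝ (Fin m)) : 0 ≤ qf m y :=
  Finset.sum_nonneg fun j _ => sq_nonneg _

lemma qf_eq_norm_sq (y : EuclideanSpace ℝ (Fin m)) : qf m y = ‖y‖^2 := by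
  have h : ‖y‖ = Real.sqrt (∑ i, (y i)^2) := by
    rw [EuclideanSpace.norm_eq]
    congr 1
    refine Finset.sum_congr rfl fun i _ => ?_
    rw [Real.norm_eq_abs, sq_abs]
  rw [h, Real.sq_sqrt (Finset.sum_nonneg fun j _ => sq_nonneg _)]
  rfl

lemma continuous_qf : Continuous (qf m) := by
  apply continuous_finset_sum
  intro j _
  exact ((EuclideanSpace.proj j).continuous).pow 2

lemma hasFDerivAt_qf (x : EuclideanSpace ℝ (Fin m)) : HasFDerivAt (qf m) (Dq m x) x := by
  have h : ∀ j : Fin m, HasFDerivAt (fun y : EuclideanSpace ℝ (Fin m) => (y j)^2)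
      ((2 * x j) • (EuclideanSpace.proj j : EuclideanSpace ℝ (Fin m) →L[ℝ] ℝ)) x := by
    intro j
    have hp := (EuclideanSpace.proj (𝕜 := ℝ) (ι := Fin m) j).hasFDerivAt (x := x)
    have h2 := hp.mul hp
    have e1 : (fun y : EuclideanSpace ℝ (Fin m) => (y j)^2) =
        (fun y : EuclideanSpace ℝ (Fin m) =>
          (EuclideanSpace.proj (𝕜 := ℝ) (ι := Fin m) j) y *
          (EuclideanSpace.proj (𝕜 := ℝ) (ι := Fin m) j) y) := by
      funext y
      show (y j)^2 = y j * y j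
      ring
    rw [e1]
    refine h2.congr_fderiv ?_
    rw [two_mul, add_smul]
    rfl
  exact HasFDerivAt.fun_sum (fun j (_ : j ∈ Finset.univ) => h j)

lemma proj_single (i : Fin m) :
    (EuclideanSpace.proj i : EuclideanSpace ℝ (Fin m) →L[ℝ] ℝ)
      (EuclideanSpace.single i 1) = 1 := by
  simp [EuclideanSpace.single_apply]

lemma Dq_single (x : EuclideanSpace ℝ (Fin m)) (i : Fin m) :
    Dq m x (EuclideanSpace.single i 1) = 2 * x i := by
  rw [Dq, ContinuousLinearMap.sum_apply]
  have h : ∀ j : Fin m, ((2 * x j) • (EuclideanSpace.proj j :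
      EuclideanSpace ℝ (Fin m) →L[ℝ] ℝ)) (EuclideanSpace.single i 1) =
      if j = i then 2 * x j else 0 := by
    intro j
    rw [ContinuousLinearMap.smul_apply]
    have h2 : (EuclideanSpace.proj j : EuclideanSpace ℝ (Fin m) →L[ℝ] ℝ)
        (EuclideanSpace.single i 1) = if j = i then 1 else 0 := by
      simp [EuclideanSpace.single_apply, eq_comm]
    rw [h2, smul_eq_mul]
    split <;> simp
  rw [Finset.sum_congr rfl (fun j _ => h j)]
  simp

lemma hasFDerivAt_prod (Θ : ℝ → ℝ) (dΘ : ℝ) (x : EuclideanSpace ℝ (Fin m)) (i : Fin m)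
    (hΘ : HasDerivAt Θ dΘ (qf m x)) :
    HasFDerivAt (fun y : EuclideanSpace ℝ (Fin m) => Θ (qf m y) * (2 * y i))
      ((Θ (qf m x)) • ((2:ℝ) • (EuclideanSpace.proj i : EuclideanSpace ℝ (Fin m) →L[ℝ] ℝ)) +
        (2 * x i) • (dΘ • Dq m x)) x := by
  have hc : HasFDerivAt (fun y : EuclideanSpace ℝ (Fin m) => Θ (qf m y)) (dΘ • Dq m x) x :=
    hΘ.comp_hasFDerivAt x (hasFDerivAt_qf m x)
  have hd : HasFDerivAt (fun y : EuclideanSpace ℝ (Fin m) => 2 * y i)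
      ((2:ℝ) • (EuclideanSpace.proj i : EuclideanSpace ℝ (Fin m) →L[ℝ] ℝ)) x := by
    have hp := (EuclideanSpace.proj (𝕜 := ℝ) (ι := Fin m) i).hasFDerivAt (x := x)
    have h2 := hp.const_mul (2:ℝ)
    exact h2
  exact hc.mul hd

lemma lap_eq (v : EuclideanSpace ℝ (Fin m) → ℝ) (Θ : ℝ → ℝ) (dΘ : ℝ)
    (x : EuclideanSpace ℝ (Fin m))
    (hloc : ∀ᶠ y in 𝓝 x, ∀ i : Fin m,
      fderiv ℝ v y (EuclideanSpace.single i 1) = Θ (qf m y) * (2 * y i))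
    (hΘ : HasDerivAt Θ dΘ (qf m x)) :
    lap v x = 2*(m:ℝ)*Θ (qf m x) + 4 * dΘ * qf m x := by
  have hx : ∀ i : Fin m, fderiv ℝ (fun y => fderiv ℝ v y (EuclideanSpace.single i 1)) x
      (EuclideanSpace.single i 1) = Θ (qf m x) * 2 + (2 * x i) * (dΘ * (2 * x i)) := by
    intro i
    have hci : (fun y => fderiv ℝ v y (EuclideanSpace.single i 1)) =ᶠ[𝓝 x]
        (fun y => Θ (qf m y) * (2 * y i)) := hloc.mono fun y hy => hy i
    have hF := (hasFDerivAt_prod m Θ dΘ x i hΘ).congr_of_eventuallyEq hci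
    rw [hF.fderiv]
    simp only [ContinuousLinearMap.add_apply, ContinuousLinearMap.smul_apply, smul_eq_mul]
    rw [Dq_single, proj_single]
    ring
  rw [lap, Finset.sum_congr rfl (fun i _ => hx i), Finset.sum_add_distrib,
    Finset.sum_const, Finset.card_univ, Fintype.card_fin]
  have h2 : ∑ i : Fin m, (2 * x i) * (dΘ * (2 * x i)) = 4 * dΘ * qf m x := by
    rw [qf, Finset.mul_sum]
    refine Finset.sum_congr rfl fun i _ => ?_
    ring
  rw [h2]
  simp only [nsmul_eq_mul]
  ring

end euclid

lemma hfun_eq (m : ℕ) (γ : ℝ) (x : EuclideanSpace ℝ (Fin m)) :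
    hfun m γ x = (if qf m x < 1 then 1 else (qf m x) ^ (-(γ/2))) := by
  rw [hfun, qf_eq_norm_sq]
  have h1 : ‖x‖ < 1 ↔ ‖x‖^2 < 1 := by
    constructor
    · intro h; nlinarith [norm_nonneg x]
    · intro h; nlinarith [norm_nonneg x]
  by_cases h : ‖x‖ < 1
  · rw [if_pos h, if_pos (h1.mp h)]
  · rw [if_neg h, if_neg (fun hc => h (h1.mpr hc))]
    rw [← Real.rpow_natCast ‖x‖ 2, ← Real.rpow_mul (norm_nonneg x)]
    congr 1
    push_cast
    ring

def W : EuclideanSpace ℝ (Fin (2*n)) → ℝ := fun x => Phi n β (qf (2*n) x)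

section exist
variable (hn : 2 ≤ n) (hβ1 : 2 < β) (hβ2 : β < 2*(n:ℝ))
include hn hβ1 hβ2

lemma W_hasFDerivAt (x : EuclideanSpace ℝ (Fin (2*n))) :
    HasFDerivAt (W n β) ((Pd n β (qf (2*n) x)) • Dq (2*n) x) x :=
  (hasDerivAt_Phi n β hn hβ1 hβ2 (qf (2*n) x)).comp_hasFDerivAt x (hasFDerivAt_qf (2*n) x)

lemma W_fderiv_apply (y : EuclideanSpace ℝ (Fin (2*n))) (i : Fin (2*n)) :
    fderiv ℝ (W n β) y (EuclideanSpace.single i 1) = Pd n β (qf (2*n) y) * (2 * y i) := by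
  rw [(W_hasFDerivAt n β hn hβ1 hβ2 y).fderiv, ContinuousLinearMap.smul_apply,
    Dq_single, smul_eq_mul]

lemma W_lap (x : EuclideanSpace ℝ (Fin (2*n))) : lap (W n β) x = hfun (2*n) β x := by
  have heq := lap_eq (2*n) (W n β) (Pd n β) (Pd2 n β (qf (2*n) x)) x
    (Filter.Eventually.of_forall (fun y i => W_fderiv_apply n β hn hβ1 hβ2 y i))
    (hasDerivAt_Pd n β hn hβ1 hβ2 (qf (2*n) x))
  rw [heq, hfun_eq]
  have hode := ode_Pd n β hn hβ1 hβ2 (qf (2*n) x)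
  rw [hte] at hode
  have hc : ((2*n:ℕ):ℝ) = 2*(n:ℝ) := by push_cast; ring
  rw [hc]
  linarith

lemma W_cont : Continuous (W n β) := by
  rw [continuous_iff_continuousAt]
  exact fun x => (W_hasFDerivAt n β hn hβ1 hβ2 x).differentiableAt.continuousAt

omit hn hβ1 hβ2 in
lemma W_radial : Radial (W n β) := by
  intro x y h
  rw [W, W, qf_eq_norm_sq, qf_eq_norm_sq, h]

lemma W_tendsto : Tendsto (W n β) (atInfty (2*n)) (𝓝 0) := by
  have h1 : Tendsto (fun x : EuclideanSpace ℝ (Fin (2*n)) => ‖x‖) (atInfty (2*n)) atTop := by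
    rw [atInfty]; exact tendsto_comap
  have h2 : Tendsto (qf (2*n)) (atInfty (2*n)) atTop := by
    have h3 := (tendsto_pow_atTop (n := 2) (by norm_num)).comp h1
    refine h3.congr fun x => ?_
    simp only [Function.comp]
    rw [← qf_eq_norm_sq]
  exact (Phi_tendsto n β hn hβ1 hβ2).comp h2

lemma W_bound (x : EuclideanSpace ℝ (Fin (2*n))) :
    |W n β x| ≤ (|cA n β| + 1 + |c1 n β| + |c2 n β|) * hfun (2*n) (β-2) x := by
  have hq0 : 0 ≤ qf (2*n) x := qf_nonneg _ x
  rw [hfun_eq, W, Phi]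
  by_cases h : qf (2*n) x < 1
  · rw [if_pos h, if_pos h, mul_one]
    have h4 : (4:ℝ) ≤ 4*(n:ℝ) := by linarith [hnR n β hn hβ1 hβ2]
    have h5 : qf (2*n) x/(4*(n:ℝ)) ≤ 1 := by
      rw [div_le_one (by linarith)]
      linarith
    have h6 : 0 ≤ qf (2*n) x/(4*(n:ℝ)) := by positivity
    calc |cA n β + qf (2*n) x/(4*(n:ℝ))| ≤ |cA n β| + |qf (2*n) x/(4*(n:ℝ))| := abs_add_le _ _
    _ ≤ |cA n β| + 1 := by rw [abs_of_nonneg h6]; linarith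
    _ ≤ |cA n β| + 1 + |c1 n β| + |c2 n β| := by
        have := abs_nonneg (c1 n β)
        have := abs_nonneg (c2 n β)
        linarith
  · rw [if_neg h, if_neg h]
    set t := qf (2*n) x with hts
    have ht1 : (1:ℝ) ≤ t := not_lt.mp h
    have he : -((β-2)/2) = aa β := by rw [aa]; ring
    rw [he]
    have hab : bb n ≤ aa β := by rw [aa, bb]; linarith
    have h7 : t ^ (bb n) ≤ t ^ (aa β) := Real.rpow_le_rpow_of_exponent_le ht1 hab
    have h8 : 0 < t ^ (aa β) := Real.rpow_pos_of_pos (by linarith) _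
    have h9 : 0 < t ^ (bb n) := Real.rpow_pos_of_pos (by linarith) _
    calc |c1 n β * t ^ aa β + c2 n β * t ^ bb n|
        ≤ |c1 n β * t ^ aa β| + |c2 n β * t ^ bb n| := abs_add_le _ _
    _ = |c1 n β| * t ^ aa β + |c2 n β| * t ^ bb n := by
        rw [abs_mul, abs_mul, abs_of_pos h8, abs_of_pos h9]
    _ ≤ |c1 n β| * t ^ aa β + |c2 n β| * t ^ aa β := by
        have := mul_le_mul_of_nonneg_left h7 (abs_nonneg (c2 n β))
        linarith
    _ ≤ (|cA n β| + 1 + |c1 n β| + |c2 n β|) * t ^ aa β := by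
        have h10 : 0 ≤ |cA n β| + 1 := by positivity
        nlinarith [abs_nonneg (c1 n β), abs_nonneg (c2 n β)]

end exist

lemma hfun_eq' (m : ℕ) (x : EuclideanSpace ℝ (Fin m)) :
    hfun m β x = hte β (qf m x) := by
  rw [hfun_eq, hte]

lemma hfun_pos (hβ1 : 2 < β) (m : ℕ) (x : EuclideanSpace ℝ (Fin m)) : 0 < hfun m β x := by
  rw [hfun_eq' β m x, hte]
  by_cases h : qf m x < 1
  · rw [if_pos h]; norm_num
  · rw [if_neg h]
    exact Real.rpow_pos_of_pos (by linarith [not_lt.mp h]) _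

def e1 (hn : 2 ≤ n) : EuclideanSpace ℝ (Fin (2*n)) :=
  EuclideanSpace.single (⟨0, by omega⟩ : Fin (2*n)) 1

def Vt (hn : 2 ≤ n) (v : EuclideanSpace ℝ (Fin (2*n)) → ℝ) (t : ℝ) : ℝ :=
  v (Real.sqrt t • e1 n hn)

open Classical in
def Psi (hn : 2 ≤ n) (v : EuclideanSpace ℝ (Fin (2*n)) → ℝ) (t : ℝ) : ℝ :=
  if DifferentiableAt ℝ (Vt n hn v) t then deriv (Vt n hn v) t else 0

lemma qf_smul (m : ℕ) (c : ℝ) (x : EuclideanSpace ℝ (Fin m)) :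
    qf m (c • x) = c^2 * qf m x := by
  rw [qf_eq_norm_sq, qf_eq_norm_sq, norm_smul, Real.norm_eq_abs, mul_pow, sq_abs]

lemma norm_e1 (hn : 2 ≤ n) : ‖e1 n hn‖ = 1 := by
  rw [e1, EuclideanSpace.norm_single]
  norm_num

lemma v_eq_Vt (hn : 2 ≤ n) (v : EuclideanSpace ℝ (Fin (2*n)) → ℝ) (hvr : Radial v)
    (y : EuclideanSpace ℝ (Fin (2*n))) : v y = Vt n hn v (qf (2*n) y) := by
  rw [Vt]
  apply hvr
  rw [norm_smul, Real.norm_eq_abs, abs_of_nonneg (Real.sqrt_nonneg _), norm_e1, mul_one,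
    qf_eq_norm_sq, Real.sqrt_sq (norm_nonneg y)]

lemma Vt_cont (hn : 2 ≤ n) (v : EuclideanSpace ℝ (Fin (2*n)) → ℝ) (hvc : Continuous v) :
    Continuous (Vt n hn v) :=
  hvc.comp (Real.continuous_sqrt.smul continuous_const)

lemma qf_section (hn : 2 ≤ n) {y : EuclideanSpace ℝ (Fin (2*n))} {t₀ : ℝ} (ht0 : 0 < t₀)
    (hq : qf (2*n) y = t₀) {t : ℝ} (ht : 0 < t) :
    qf (2*n) ((Real.sqrt t * (Real.sqrt t₀)⁻¹) • y) = t := by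
  rw [qf_smul, hq, mul_pow, inv_pow, Real.sq_sqrt ht.le, Real.sq_sqrt ht0.le]
  field_simp

lemma diff_Vt_of_diff (hn : 2 ≤ n) (v : EuclideanSpace ℝ (Fin (2*n)) → ℝ) (hvr : Radial v)
    {y : EuclideanSpace ℝ (Fin (2*n))} {t₀ : ℝ} (ht0 : 0 < t₀)
    (hq : qf (2*n) y = t₀) (hd : DifferentiableAt ℝ v y) :
    DifferentiableAt ℝ (Vt n hn v) t₀ := by
  have hst0 : Real.sqrt t₀ ≠ 0 := by
    simp [Real.sqrt_eq_zero', not_le, ht0]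
  have hσd : DifferentiableAt ℝ
      (fun t : ℝ => (Real.sqrt t * (Real.sqrt t₀)⁻¹) • y) t₀ := by
    apply DifferentiableAt.smul_const
    exact ((Real.hasDerivAt_sqrt (ne_of_gt ht0)).differentiableAt).mul_const _
  have hσt0 : (Real.sqrt t₀ * (Real.sqrt t₀)⁻¹) • y = y := by
    rw [mul_inv_cancel₀ hst0, one_smul]
  have hcomp : DifferentiableAt ℝ
      (fun t : ℝ => v ((Real.sqrt t * (Real.sqrt t₀)⁻¹) • y)) t₀ := by
    apply DifferentiableAt.comp
    · rw [hσt0]; exact hd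
    · exact hσd
  refine hcomp.congr_of_eventuallyEq ?_
  filter_upwards [Ioi_mem_nhds ht0] with t ht
  rw [v_eq_Vt n hn v hvr, qf_section n hn ht0 hq (mem_Ioi.mp ht)]

lemma v_hasFDerivAt (hn : 2 ≤ n) (v : EuclideanSpace ℝ (Fin (2*n)) → ℝ) (hvr : Radial v)
    {y : EuclideanSpace ℝ (Fin (2*n))}
    (hD : DifferentiableAt ℝ (Vt n hn v) (qf (2*n) y)) :
    HasFDerivAt v ((deriv (Vt n hn v) (qf (2*n) y)) • Dq (2*n) y) y := by
  refine HasFDerivAt.congr_of_eventuallyEq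
    ((hD.hasDerivAt).comp_hasFDerivAt y (hasFDerivAt_qf (2*n) y)) ?_
  exact Filter.Eventually.of_forall fun z => v_eq_Vt n hn v hvr z

lemma fderiv_v_eq (hn : 2 ≤ n) (v : EuclideanSpace ℝ (Fin (2*n)) → ℝ) (hvr : Radial v)
    {y : EuclideanSpace ℝ (Fin (2*n))} (hy : 0 < qf (2*n) y) (i : Fin (2*n)) :
    fderiv ℝ v y (EuclideanSpace.single i 1) = Psi n hn v (qf (2*n) y) * (2 * y i) := by
  by_cases hD : DifferentiableAt ℝ (Vt n hn v) (qf (2*n) y)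
  · rw [(v_hasFDerivAt n hn v hvr hD).fderiv, ContinuousLinearMap.smul_apply, Dq_single,
      smul_eq_mul, Psi, if_pos hD]
  · have hnd : ¬ DifferentiableAt ℝ v y := by
      intro hd
      exact hD (diff_Vt_of_diff n hn v hvr hy rfl hd)
    rw [fderiv_zero_of_not_differentiableAt hnd, Psi, if_neg hD]
    simp

lemma Psi_diff_ode (hn : 2 ≤ n) (hβ1 : 2 < β) (hβ2 : β < 2*(n:ℝ))
    (v : EuclideanSpace ℝ (Fin (2*n)) → ℝ) (hvr : Radial v)
    (hvl : ∀ x, lap v x = hfun (2*n) β x) {t₀ : ℝ} (ht0 : 0 < t₀) :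
    DifferentiableAt ℝ (Psi n hn v) t₀ ∧
      4*t₀*(deriv (Psi n hn v) t₀) + 4*(n:ℝ)*(Psi n hn v t₀) = hte β t₀ := by
  have h2n : (0:ℝ) < (2*n:ℕ) := by
    have : 0 < 2*n := by omega
    exact_mod_cast this
  set c : ℝ := Real.sqrt (t₀/(2*n)) with hc
  have hcpos : 0 < c := Real.sqrt_pos.mpr (by positivity)
  set x₀ : EuclideanSpace ℝ (Fin (2*n)) := WithLp.toLp 2 (fun _ => c) with hx₀
  have hx₀i : ∀ i : Fin (2*n), x₀ i = c := fun i => rfl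
  have hqx₀ : qf (2*n) x₀ = t₀ := by
    rw [qf]
    have : ∀ j : Fin (2*n), (x₀ j)^2 = t₀/(2*n) := by
      intro j
      rw [hx₀i j, hc, Real.sq_sqrt (by positivity)]
    rw [Finset.sum_congr rfl (fun j _ => this j), Finset.sum_const, Finset.card_univ,
      Fintype.card_fin, nsmul_eq_mul]
    field_simp
    norm_num
  -- the formula for fderiv v holds near x₀
  have hopen : IsOpen {y : EuclideanSpace ℝ (Fin (2*n)) | 0 < qf (2*n) y} :=
    isOpen_lt continuous_const (continuous_qf (2*n))
  have hmem : x₀ ∈ {y : EuclideanSpace ℝ (Fin (2*n)) | 0 < qf (2*n) y} := by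
    simp only [mem_setOf_eq, hqx₀]; exact ht0
  have hloc : ∀ᶠ y in 𝓝 x₀, ∀ i : Fin (2*n),
      fderiv ℝ v y (EuclideanSpace.single i 1) = Psi n hn v (qf (2*n) y) * (2 * y i) := by
    filter_upwards [hopen.mem_nhds hmem] with y hy
    exact fun i => fderiv_v_eq n hn v hvr hy i
  -- some second derivative is nonzero
  have hlap := hvl x₀
  have hpos := hfun_pos β hβ1 (2*n) x₀
  have hexists : ∃ i : Fin (2*n), DifferentiableAt ℝ
      (fun y => fderiv ℝ v y (EuclideanSpace.single i 1)) x₀ := by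
    by_contra hcon
    push_neg at hcon
    have hzero : lap v x₀ = 0 := by
      rw [lap]
      refine Finset.sum_eq_zero fun i _ => ?_
      rw [fderiv_zero_of_not_differentiableAt (hcon i)]
      simp
    rw [hzero] at hlap
    linarith
  obtain ⟨i, hdGi⟩ := hexists
  -- Psi ∘ qf is differentiable at x₀
  have hproj : Continuous (fun y : EuclideanSpace ℝ (Fin (2*n)) => y i) :=
    (EuclideanSpace.proj (𝕜 := ℝ) (ι := Fin (2*n)) i).continuous
  have hne : ∀ᶠ y in 𝓝 x₀, (2 * y i) ≠ 0 := by
    have hcont : ContinuousAt (fun y : EuclideanSpace ℝ (Fin (2*n)) => 2 * y i) x₀ :=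
      (continuous_const.mul hproj).continuousAt
    have : (2 * x₀ i) ≠ 0 := by rw [hx₀i i]; positivity
    exact hcont.eventually_ne this
  have hGeq : (fun y => fderiv ℝ v y (EuclideanSpace.single i 1)) =ᶠ[𝓝 x₀]
      (fun y => Psi n hn v (qf (2*n) y) * (2 * y i)) := hloc.mono fun y hy => hy i
  have hTheta : DifferentiableAt ℝ
      (fun y : EuclideanSpace ℝ (Fin (2*n)) => Psi n hn v (qf (2*n) y) * (2 * y i)) x₀ :=
    (hGeq.differentiableAt_iff).mp hdGi
  have hlin : DifferentiableAt ℝ (fun y : EuclideanSpace ℝ (Fin (2*n)) => 2 * y i) x₀ := by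
    have := (EuclideanSpace.proj (𝕜 := ℝ) (ι := Fin (2*n)) i).differentiableAt
      (x := x₀)
    exact this.const_mul 2
  have hPsiQf : DifferentiableAt ℝ
      (fun y : EuclideanSpace ℝ (Fin (2*n)) => Psi n hn v (qf (2*n) y)) x₀ := by
    have hdiv := hTheta.mul
      (hlin.inv (show (2:ℝ) * x₀ i ≠ 0 by rw [hx₀i i]; positivity))
    have heq : (fun y : EuclideanSpace ℝ (Fin (2*n)) =>
        (Psi n hn v (qf (2*n) y) * (2 * y i)) * (2 * y i)⁻¹) =ᶠ[𝓝 x₀]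
        (fun y : EuclideanSpace ℝ (Fin (2*n)) => Psi n hn v (qf (2*n) y)) := by
      filter_upwards [hne] with y hy
      rw [mul_inv_cancel_right₀ hy]
    exact (heq.differentiableAt_iff).mp hdiv
  have hst0 : Real.sqrt t₀ ≠ 0 := by
    simp [Real.sqrt_eq_zero', not_le, ht0]
  have hσd : DifferentiableAt ℝ
      (fun t : ℝ => (Real.sqrt t * (Real.sqrt t₀)⁻¹) • x₀) t₀ := by
    apply DifferentiableAt.smul_const
    exact ((Real.hasDerivAt_sqrt (ne_of_gt ht0)).differentiableAt).mul_const _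
  have hσt0 : (Real.sqrt t₀ * (Real.sqrt t₀)⁻¹) • x₀ = x₀ := by
    rw [mul_inv_cancel₀ hst0, one_smul]
  have hPsi : DifferentiableAt ℝ (Psi n hn v) t₀ := by
    have hcomp : DifferentiableAt ℝ
        (fun t : ℝ => Psi n hn v (qf (2*n) ((Real.sqrt t * (Real.sqrt t₀)⁻¹) • x₀))) t₀ := by
      have hin : DifferentiableAt ℝ
          (fun y : EuclideanSpace ℝ (Fin (2*n)) => Psi n hn v (qf (2*n) y))
          ((Real.sqrt t₀ * (Real.sqrt t₀)⁻¹) • x₀) := by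
        rw [hσt0]; exact hPsiQf
      exact hin.comp t₀ hσd
    refine hcomp.congr_of_eventuallyEq ?_
    filter_upwards [Ioi_mem_nhds ht0] with t ht
    rw [qf_section n hn ht0 hqx₀ (mem_Ioi.mp ht)]
  refine ⟨hPsi, ?_⟩
  have hΘ : HasDerivAt (Psi n hn v) (deriv (Psi n hn v) t₀) (qf (2*n) x₀) := by
    rw [hqx₀]; exact hPsi.hasDerivAt
  have hlapeq := lap_eq (2*n) v (Psi n hn v) (deriv (Psi n hn v) t₀) x₀ hloc hΘ
  rw [hvl x₀, hfun_eq' β (2*n) x₀, hqx₀] at hlapeq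
  have hcast : ((2*n:ℕ):ℝ) = 2*(n:ℝ) := by push_cast; ring
  rw [hcast] at hlapeq
  linarith


lemma Psi_eq_Pd (hn : 2 ≤ n) (hβ1 : 2 < β) (hβ2 : β < 2*(n:ℝ))
    (v : EuclideanSpace ℝ (Fin (2*n)) → ℝ) (hvc : Continuous v) (hvr : Radial v)
    (hvl : ∀ x, lap v x = hfun (2*n) β x) :
    ∀ t : ℝ, 0 < t → Psi n hn v t = Pd n β t := by
  have hdiffPsi := fun (t : ℝ) (ht : 0 < t) => (Psi_diff_ode n β hn hβ1 hβ2 v hvr hvl ht).1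
  have hode := fun (t : ℝ) (ht : 0 < t) => (Psi_diff_ode n β hn hβ1 hβ2 v hvr hvl ht).2
  have hF := Fconst n β hn hβ1 hβ2 (Psi n hn v) (fun t => deriv (Psi n hn v) t)
    (fun t ht => (hdiffPsi t ht).hasDerivAt) hode
  set K := Psi n hn v 1 - HH n β 1 with hKdef
  obtain ⟨M, hM⟩ := (isCompact_Icc (a := (0:ℝ)) (b := 1)).exists_bound_of_continuousOn
    ((Vt_cont n hn v hvc).continuousOn)
  have hnp : (0:ℝ) < (n:ℝ) := hnpos n β hn hβ1 hβ2
  have hPsiform : ∀ t : ℝ, 0 < t → Psi n hn v t = (K + HH n β t) / t^n := by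
    intro t ht
    have h1 := hF t ht
    rw [eq_div_iff (pow_pos ht n).ne']
    linarith [h1]
  have hrpow : ∀ t : ℝ, 0 < t → t ^ (-(n:ℝ)) = ((t^n : ℝ))⁻¹ := by
    intro t ht
    rw [Real.rpow_neg ht.le, Real.rpow_natCast]
  have hK0 : K = 0 := by
    rcases lt_trichotomy K 0 with hKlt | h | hKgt
    · exfalso
      set δ : ℝ := min (1/2) (2*(n:ℝ)*(-K)) with hδdef
      have hδpos : 0 < δ := lt_min (by norm_num) (by nlinarith)
      have hδhalf : δ ≤ 1/2 := min_le_left _ _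
      have hHHbd : ∀ t ∈ Ioc (0:ℝ) δ, HH n β t ≤ -K/2 := by
        intro t ht
        have ht1 : t < 1 := by have := ht.2; linarith
        rw [HH, if_pos ht1]
        have h1 : t^n ≤ t^1 := pow_le_pow_of_le_one ht.1.le (by linarith) (by omega)
        have h3 : δ ≤ 2*(n:ℝ)*(-K) := min_le_right _ _
        rw [div_le_iff₀ (by linarith : (0:ℝ) < 4*(n:ℝ))]
        have h4 : t ≤ 2*(n:ℝ)*(-K) := le_trans ht.2 h3
        rw [pow_one] at h1
        nlinarith
      have hdiff' : ∀ t ∈ Ioc (0:ℝ) δ, DifferentiableAt ℝ (Vt n hn v) t := by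
        intro t ht
        by_contra hnd
        have h0 : Psi n hn v t = 0 := by rw [Psi, if_neg hnd]
        have h2 := hPsiform t ht.1
        rw [h0, eq_comm, div_eq_zero_iff] at h2
        rcases h2 with h2 | h2
        · have := hHHbd t ht
          linarith
        · exact (pow_pos ht.1 n).ne' h2
      refine blowup n β hn hβ1 hβ2 (f := Vt n hn v) (g := Psi n hn v) (c := K/2) (δ := δ)
        (M := M) (by linarith) hδpos ?_ ?_ ?_
      · intro t ht
        have hd := (hdiff' t ht).hasDerivAt
        have he : Psi n hn v t = deriv (Vt n hn v) t := by rw [Psi, if_pos (hdiff' t ht)]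
        rw [he]
        exact hd
      · intro t ht
        rw [hPsiform t ht.1, hrpow t ht.1]
        have h1 := hHHbd t ht
        have h2 : (0:ℝ) < t^n := pow_pos ht.1 n
        rw [div_le_iff₀ h2, mul_assoc, inv_mul_cancel₀ h2.ne', mul_one]
        linarith
      · intro t ht
        have hmem : t ∈ Icc (0:ℝ) 1 := ⟨ht.1.le, le_trans ht.2 (by linarith)⟩
        have := hM t hmem
        rw [Real.norm_eq_abs] at this
        exact (abs_le.mp this).2
    · exact h
    · exfalso
      have hdiff' : ∀ t ∈ Ioc (0:ℝ) 1, DifferentiableAt ℝ (Vt n hn v) t := by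
        intro t ht
        by_contra hnd
        have h0 : Psi n hn v t = 0 := by rw [Psi, if_neg hnd]
        have h2 := hPsiform t ht.1
        rw [h0, eq_comm, div_eq_zero_iff] at h2
        rcases h2 with h2 | h2
        · have := HH_pos n β hn hβ1 hβ2 t ht.1
          linarith
        · exact (pow_pos ht.1 n).ne' h2
      refine blowup n β hn hβ1 hβ2 (f := fun t => -(Vt n hn v t))
        (g := fun t => -(Psi n hn v t)) (c := -K) (δ := 1)
        (M := M) (by linarith) one_pos ?_ ?_ ?_
      · intro t ht
        have hd := (hdiff' t ht).hasDerivAt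
        have he : Psi n hn v t = deriv (Vt n hn v) t := by rw [Psi, if_pos (hdiff' t ht)]
        rw [he]
        exact hd.neg
      · intro t ht
        rw [hPsiform t ht.1, hrpow t ht.1]
        have h1 := HH_pos n β hn hβ1 hβ2 t ht.1
        have h2 : (0:ℝ) < t^n := pow_pos ht.1 n
        rw [neg_le, neg_mul, neg_neg, le_div_iff₀ h2, mul_assoc, inv_mul_cancel₀ h2.ne',
          mul_one]
        linarith
      · intro t ht
        have hmem : t ∈ Icc (0:ℝ) 1 := ⟨ht.1.le, ht.2⟩
        have := hM t hmem
        rw [Real.norm_eq_abs] at this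
        linarith [(abs_le.mp this).1]
  intro t ht
  have h1 := hPsiform t ht
  have h2 := Pd_eq_HH n β hn hβ1 hβ2 t ht
  rw [hK0, zero_add] at h1
  rw [h1, ← h2]
  field_simp

lemma Vt_hasDerivAt (hn : 2 ≤ n) (hβ1 : 2 < β) (hβ2 : β < 2*(n:ℝ))
    (v : EuclideanSpace ℝ (Fin (2*n)) → ℝ) (hvc : Continuous v) (hvr : Radial v)
    (hvl : ∀ x, lap v x = hfun (2*n) β x) {t : ℝ} (ht : 0 < t) :
    HasDerivAt (Vt n hn v) (Pd n β t) t := by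
  have hPsi := Psi_eq_Pd n β hn hβ1 hβ2 v hvc hvr hvl t ht
  have hd : DifferentiableAt ℝ (Vt n hn v) t := by
    by_contra hnd
    have h0 : Psi n hn v t = 0 := by rw [Psi, if_neg hnd]
    rw [h0] at hPsi
    exact absurd hPsi.symm (ne_of_gt (Pd_pos n β hn hβ1 hβ2 t ht))
  have he : Psi n hn v t = deriv (Vt n hn v) t := by rw [Psi, if_pos hd]
  rw [← hPsi, he]
  exact hd.hasDerivAt

lemma sqrt_tendsto_atTop : Tendsto Real.sqrt atTop atTop := by
  refine (tendsto_rpow_atTop (y := (1/2:ℝ)) (by norm_num)).congr' ?_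
  filter_upwards with x
  rw [← Real.sqrt_eq_rpow]

lemma v_eq_W (hn : 2 ≤ n) (hβ1 : 2 < β) (hβ2 : β < 2*(n:ℝ))
    (v : EuclideanSpace ℝ (Fin (2*n)) → ℝ) (hvc : Continuous v) (hvr : Radial v)
    (hvt : Tendsto v (atInfty (2*n)) (𝓝 0))
    (hvl : ∀ x, lap v x = hfun (2*n) β x) : v = W n β := by
  have hVt0 : Tendsto (Vt n hn v) atTop (𝓝 0) := by
    apply hvt.comp
    rw [atInfty, tendsto_comap_iff]
    have he : (fun t : ℝ => ‖Real.sqrt t • e1 n hn‖) = Real.sqrt := by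
      funext t
      rw [norm_smul, Real.norm_eq_abs, abs_of_nonneg (Real.sqrt_nonneg _), norm_e1, mul_one]
    show Tendsto (fun t : ℝ => ‖Real.sqrt t • e1 n hn‖) atTop atTop
    rw [he]
    exact sqrt_tendsto_atTop
  have hdiff0 : ∀ t : ℝ, 0 < t →
      HasDerivAt (fun s => Vt n hn v s - Phi n β s) 0 t := by
    intro t ht
    have := (Vt_hasDerivAt n β hn hβ1 hβ2 v hvc hvr hvl ht).sub
      (hasDerivAt_Phi n β hn hβ1 hβ2 t)
    exact this.congr_deriv (sub_self _)
  have hconst : ∀ t : ℝ, 0 < t → Vt n hn v t - Phi n β t = Vt n hn v 1 - Phi n β 1 :=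
    fun t ht => deriv_zero_const hdiff0 ht one_pos
  have hcst0 : Vt n hn v 1 - Phi n β 1 = 0 := by
    have h1 : Tendsto (fun t => Vt n hn v t - Phi n β t) atTop (𝓝 0) := by
      simpa using hVt0.sub (Phi_tendsto n β hn hβ1 hβ2)
    have h2 : Tendsto (fun t => Vt n hn v t - Phi n β t) atTop
        (𝓝 (Vt n hn v 1 - Phi n β 1)) := by
      refine Tendsto.congr' ?_ tendsto_const_nhds
      filter_upwards [eventually_gt_atTop (0:ℝ)] with t ht
      exact (hconst t ht).symm
    exact tendsto_nhds_unique h2 h1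
  have hpos : ∀ t : ℝ, 0 < t → Vt n hn v t = Phi n β t := by
    intro t ht
    have := hconst t ht
    rw [hcst0] at this
    linarith
  have hzero : Vt n hn v 0 = Phi n β 0 := by
    have hc1 : ContinuousAt (Vt n hn v) 0 := (Vt_cont n hn v hvc).continuousAt
    have hc2 : ContinuousAt (Phi n β) 0 :=
      (hasDerivAt_Phi n β hn hβ1 hβ2 0).differentiableAt.continuousAt
    have l1 : Tendsto (Vt n hn v) (𝓝[>] (0:ℝ)) (𝓝 (Vt n hn v 0)) :=
      hc1.continuousWithinAt
    have l2 : Tendsto (Phi n β) (𝓝[>] (0:ℝ)) (𝓝 (Phi n β 0)) := hc2.continuousWithinAt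
    have l3 : Tendsto (Vt n hn v) (𝓝[>] (0:ℝ)) (𝓝 (Phi n β 0)) := by
      refine Tendsto.congr' ?_ l2
      filter_upwards [self_mem_nhdsWithin] with t ht
      exact (hpos t (mem_Ioi.mp ht)).symm
    exact tendsto_nhds_unique l1 l3
  funext x
  rw [v_eq_Vt n hn v hvr x, W]
  rcases (qf_nonneg (2*n) x).eq_or_lt with hq | hq
  · rw [← hq, hzero]
  · exact hpos _ hq

end S16

/-- For `2 < β < 2n` there is a unique radial continuous `w` vanishing at infinity with
`Δ w = h_β` in `ℝ^{2n}`, and `|w| ≤ C_{n,β} h_{β-2}`. -/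
theorem stmt16 (n : ℕ) (hn : 2 ≤ n) (β : ℝ) (hβ1 : 2 < β) (hβ2 : β < 2 * (n:ℝ)) :
    (∃! w : EuclideanSpace ℝ (Fin (2*n)) → ℝ,
      Continuous w ∧ Radial w ∧ Tendsto w (atInfty (2*n)) (nhds 0) ∧
      ∀ x, lap w x = hfun (2*n) β x) ∧
    ∃ C > (0:ℝ), ∀ w : EuclideanSpace ℝ (Fin (2*n)) → ℝ,
      (Continuous w ∧ Radial w ∧ Tendsto w (atInfty (2*n)) (nhds 0) ∧
        ∀ x, lap w x = hfun (2*n) β x) →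
      ∀ x, |w x| ≤ C * hfun (2*n) (β - 2) x := by
  have hWprop : Continuous (S16.W n β) ∧ Radial (S16.W n β) ∧
      Tendsto (S16.W n β) (atInfty (2*n)) (nhds 0) ∧
      ∀ x, lap (S16.W n β) x = hfun (2*n) β x :=
    ⟨S16.W_cont n β hn hβ1 hβ2, S16.W_radial n β, S16.W_tendsto n β hn hβ1 hβ2,
      S16.W_lap n β hn hβ1 hβ2⟩
  constructor
  · refine ⟨S16.W n β, hWprop, ?_⟩
    intro v hv
    exact S16.v_eq_W n β hn hβ1 hβ2 v hv.1 hv.2.1 hv.2.2.1 hv.2.2.2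
  · refine ⟨|S16.cA n β| + 1 + |S16.c1 n β| + |S16.c2 n β|, ?_, ?_⟩
    · have h1 := abs_nonneg (S16.cA n β)
      have h2 := abs_nonneg (S16.c1 n β)
      have h3 := abs_nonneg (S16.c2 n β)
      linarith
    · intro w hw x
      rw [S16.v_eq_W n β hn hβ1 hβ2 w hw.1 hw.2.1 hw.2.2.1 hw.2.2.2]
      exact S16.W_bound n β hn hβ1 hβ2 x
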